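/- Let (Ω, 𝔽, P) be a probability space carrying ℕ-valued random variables Y, Z with finite second moments and nonzero variances, i.i.d. sequences (ξ_i)_{i≥1} of Bernoulli(r) and (η_j)_{j≥1} of Bernoulli(s) random variables (r, s ∈ (0,1]), where the families (ξ_i), (η_j) and (Y,Z) are jointly independent of one another. Define the componentwise thinnings Y_r = Σ_{i=1}^{Y} ξ_i and Z_s = Σ_{j=1}^{Z} η_j. Then Cov(Y_r, Z_s) = r·s·Cov(Y, Z), Var(Y_r) = r²·Var(Y) + r(1−r)·E[Y], Var(Z_s) = s²·Var(Z) + s(1−s)·E[Z], and consequently, if Var(Y_r) and Var(Z_s) are nonzero, the correlation coefficients satisfy Corr(Y_r, Z_s)² ≤ Corr(Y, Z)², with equality when r = s = 1. -/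

import Mathlib

open scoped BigOperators
open MeasureTheory ProbabilityTheory

/-- Index type for the joint independence of `(Y,Z)`, the family `(ξ_i)` and the
family `(η_j)`. -/
abbrev JIdx : Type := Unit ⊕ (ℕ ⊕ ℕ)

/-- Codomains: `(Y,Z)` takes values in `ℕ × ℕ`, the Bernoulli variables in `ℕ`. -/
def JTy : JIdx → Type
  | .inl _ => ℕ × ℕ
  | .inr _ => ℕ

/-- The measurable space structures on the codomains. -/
def JMS : (i : JIdx) → MeasurableSpace (JTy i)
  | .inl _ => show MeasurableSpace (ℕ × ℕ) from inferInstance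
  | .inr _ => show MeasurableSpace ℕ from inferInstance

/-- The combined family: the pair `(Y,Z)`, the variables `ξ_i` and the variables `η_j`. -/
def JFam {Ω : Type*} (Y Z : Ω → ℕ) (ξ η : ℕ → Ω → ℕ) : (i : JIdx) → Ω → JTy i
  | .inl _ => fun ω => (Y ω, Z ω)
  | .inr (.inl i) => ξ i
  | .inr (.inr j) => η j

/-- The covariance of two real random variables. -/
noncomputable def cov {Ω : Type*} [MeasurableSpace Ω] (P : Measure Ω) (U V : Ω → ℝ) : ℝ :=
  ∫ ω, (U ω - ∫ ω', U ω' ∂P) * (V ω - ∫ ω', V ω' ∂P) ∂P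

/-- The correlation coefficient of two real random variables. -/
noncomputable def corr {Ω : Type*} [MeasurableSpace Ω] (P : Measure Ω) (U V : Ω → ℝ) : ℝ :=
  cov P U V / Real.sqrt (variance U P * variance V P)


section ThinningHelpers

open ENNReal
set_option maxHeartbeats 1000000

set_option linter.unusedSectionVars false in
section
variable {Ω : Type*} [MeasurableSpace Ω] {P : Measure Ω} [IsProbabilityMeasure P]

lemma setm {W : Ω → ℕ} (hW : Measurable W) (s : Set ℕ) :
    MeasurableSet {ω | W ω ∈ s} := hW .of_discrete

lemma thin_measurable (W : Ω → ℕ) (ζ : ℕ → Ω → ℕ) (hW : Measurable W)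
    (hζ : ∀ i, Measurable (ζ i)) :
    Measurable fun ω => ∑ i ∈ Finset.range (W ω), ζ i ω := by
  have h : (fun ω => ∑ i ∈ Finset.range (W ω), ζ i ω)
      = (fun p : Ω × ℕ => ∑ i ∈ Finset.range p.2, ζ i p.1) ∘ fun ω => (ω, W ω) := rfl
  rw [h]
  refine (measurable_from_prod_countable_left fun n => ?_).comp (measurable_id.prodMk hW)
  simpa using Finset.measurable_sum (Finset.range n) fun i _ => hζ i

lemma tsum_ite_lt (n : ℕ) : ∑' i : ℕ, (if i < n then (1 : ℝ≥0∞) else 0) = n := by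
  rw [tsum_eq_sum (s := Finset.range n) (fun i hi => if_neg (by simpa using hi))]
  rw [Finset.sum_congr rfl fun i hi => if_pos (Finset.mem_range.mp hi)]
  simp

lemma bern_lintegral (ζ : Ω → ℕ) (hm : Measurable ζ) (h01 : ∀ ω, ζ ω ≤ 1) {p : ℝ}
    (hd : P {ω | ζ ω = 1} = ENNReal.ofReal p) :
    ∫⁻ ω, (ζ ω : ℝ≥0∞) ∂P = ENNReal.ofReal p := by
  have h : ∀ ω, (ζ ω : ℝ≥0∞) = Set.indicator {ω | ζ ω = 1} (1 : Ω → ℝ≥0∞) ω := by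
    intro ω
    by_cases h1 : ζ ω = 1
    · simp [Set.indicator, h1]
    · have h0 : ζ ω = 0 := by have := h01 ω; omega
      simp [Set.indicator, h0, h1]
  simp_rw [h]
  have hms : MeasurableSet {ω | ζ ω = 1} := setm hm {1}
  rw [lintegral_indicator_one hms]
  exact hd

lemma lintegral_nat (W : Ω → ℕ) (hW : Measurable W) :
    ∫⁻ ω, (W ω : ℝ≥0∞) ∂P = ∑' i : ℕ, P {ω | i < W ω} := by
  have h : ∀ ω, (W ω : ℝ≥0∞)
      = ∑' i : ℕ, Set.indicator {ω | i < W ω} (1 : Ω → ℝ≥0∞) ω := by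
    intro ω
    have h2 : ∀ i : ℕ, Set.indicator {ω | i < W ω} (1 : Ω → ℝ≥0∞) ω
        = if i < W ω then 1 else 0 := by
      intro i; by_cases hi : i < W ω <;> simp [Set.indicator, hi]
    simp_rw [h2, tsum_ite_lt]
  simp_rw [h]
  rw [lintegral_tsum fun i => ((measurable_one.indicator
    (show MeasurableSet {ω | i < W ω} from setm hW _)).aemeasurable)]
  exact tsum_congr fun i =>
    lintegral_indicator_one (show MeasurableSet {ω | i < W ω} from setm hW _)

lemma lintegral_nat_mul (V W : Ω → ℕ) (hV : Measurable V) (hW : Measurable W) :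
    ∫⁻ ω, ((V ω * W ω : ℕ) : ℝ≥0∞) ∂P = ∑' i : ℕ, ∑' j : ℕ, P {ω | i < V ω ∧ j < W ω} := by
  have hms : ∀ i j : ℕ, MeasurableSet {ω | i < V ω ∧ j < W ω} := fun i j =>
    (setm hV {n | i < n}).inter (setm hW {n | j < n})
  have h : ∀ ω, ((V ω * W ω : ℕ) : ℝ≥0∞)
      = ∑' i : ℕ, ∑' j : ℕ, Set.indicator {ω | i < V ω ∧ j < W ω} (1 : Ω → ℝ≥0∞) ω := by
    intro ω
    have h2 : ∀ i j : ℕ, Set.indicator {ω | i < V ω ∧ j < W ω} (1 : Ω → ℝ≥0∞) ω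
        = (if i < V ω then 1 else 0) * (if j < W ω then 1 else 0) := by
      intro i j
      by_cases hi : i < V ω <;> by_cases hj : j < W ω <;>
        simp [Set.indicator, hi, hj]
    simp_rw [h2]
    rw [Nat.cast_mul]
    simp_rw [ENNReal.tsum_mul_left, tsum_ite_lt]
    rw [ENNReal.tsum_mul_right, tsum_ite_lt]
  simp_rw [h]
  rw [lintegral_tsum fun i => Measurable.aemeasurable (by
    exact Measurable.ennreal_tsum fun j => measurable_one.indicator (hms i j))]
  congr 1; funext i
  rw [lintegral_tsum fun j => (measurable_one.indicator (hms i j)).aemeasurable]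
  congr 1; funext j
  exact lintegral_indicator_one (hms i j)

lemma thin_term (W : Ω → ℕ) (ζ : Ω → ℕ) {p : ℝ} (i : ℕ)
    (hW : Measurable W) (hζ : Measurable ζ) (h01 : ∀ ω, ζ ω ≤ 1)
    (hd : P {ω | ζ ω = 1} = ENNReal.ofReal p)
    (hind : IndepFun ζ W P) :
    ∫⁻ ω, (if i < W ω then (ζ ω : ℝ≥0∞) else 0) ∂P
      = ENNReal.ofReal p * P {ω | i < W ω} := by
  have h : ∀ ω, (if i < W ω then (ζ ω : ℝ≥0∞) else 0)
      = ((fun n : ℕ => (n : ℝ≥0∞)) ∘ ζ) ω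
        * ((fun m : ℕ => if i < m then (1:ℝ≥0∞) else 0) ∘ W) ω := by
    intro ω; by_cases hc : i < W ω <;> simp [hc]
  simp_rw [h]
  rw [lintegral_mul_eq_lintegral_mul_lintegral_of_indepFun''
      ((measurable_of_countable _).comp hζ).aemeasurable
      ((measurable_of_countable _).comp hW).aemeasurable
      (hind.comp (measurable_of_countable _) (measurable_of_countable _))]
  rw [show ∫⁻ ω, ((fun n : ℕ => (n : ℝ≥0∞)) ∘ ζ) ω ∂P = ∫⁻ ω, (ζ ω : ℝ≥0∞) ∂P from rfl,
    bern_lintegral ζ hζ h01 hd]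
  congr 1
  have h2 : ∀ ω, ((fun m : ℕ => if i < m then (1:ℝ≥0∞) else 0) ∘ W) ω
      = Set.indicator {ω | i < W ω} (1 : Ω → ℝ≥0∞) ω := by
    intro ω; by_cases hc : i < W ω <;> simp [Set.indicator, hc]
  simp_rw [h2]
  exact lintegral_indicator_one (show MeasurableSet {ω | i < W ω} from setm hW _)

lemma fmeas {W : Ω → ℕ} {ζ : Ω → ℕ} (hW : Measurable W) (hζ : Measurable ζ) (i : ℕ) :
    Measurable fun ω => (if i < W ω then (ζ ω : ℝ≥0∞) else 0) :=
  Measurable.ite (show MeasurableSet {ω | i < W ω} from setm hW _)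
    ((measurable_of_countable _).comp hζ) measurable_const

lemma hpt (W : Ω → ℕ) (ζ : ℕ → Ω → ℕ) (ω : Ω) :
    ((∑ i ∈ Finset.range (W ω), ζ i ω : ℕ) : ℝ≥0∞)
      = ∑' i : ℕ, (if i < W ω then (ζ i ω : ℝ≥0∞) else 0) := by
  rw [tsum_eq_sum (s := Finset.range (W ω)) (fun i hi => if_neg (by simpa using hi)),
      Nat.cast_sum]
  exact Finset.sum_congr rfl fun i hi => by rw [if_pos (Finset.mem_range.mp hi)]

lemma thin_lintegral (W : Ω → ℕ) (ζ : ℕ → Ω → ℕ) {p : ℝ}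
    (hW : Measurable W) (hζ : ∀ i, Measurable (ζ i))
    (h01 : ∀ i ω, ζ i ω ≤ 1) (hd : ∀ i, P {ω | ζ i ω = 1} = ENNReal.ofReal p)
    (hind : ∀ i, IndepFun (ζ i) W P) :
    ∫⁻ ω, ((∑ i ∈ Finset.range (W ω), ζ i ω : ℕ) : ℝ≥0∞) ∂P
      = ENNReal.ofReal p * ∫⁻ ω, (W ω : ℝ≥0∞) ∂P := by
  simp_rw [hpt W ζ]
  rw [lintegral_tsum fun i => (fmeas hW (hζ i) i).aemeasurable]
  rw [tsum_congr fun i => thin_term W (ζ i) i hW (hζ i) (h01 i) (hd i) (hind i)]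
  rw [ENNReal.tsum_mul_left, lintegral_nat W hW]

lemma pair_lintegral (ζ θ : Ω → ℕ) {p q : ℝ}
    (hζ : Measurable ζ) (hθ : Measurable θ)
    (h01ζ : ∀ ω, ζ ω ≤ 1) (h01θ : ∀ ω, θ ω ≤ 1)
    (hdζ : P {ω | ζ ω = 1} = ENNReal.ofReal p) (hdθ : P {ω | θ ω = 1} = ENNReal.ofReal q)
    (hind : IndepFun ζ θ P) :
    ∫⁻ ω, (ζ ω : ℝ≥0∞) * (θ ω : ℝ≥0∞) ∂P = ENNReal.ofReal p * ENNReal.ofReal q := by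
  have := lintegral_mul_eq_lintegral_mul_lintegral_of_indepFun''
      (f := fun ω => (ζ ω : ℝ≥0∞)) (g := fun ω => (θ ω : ℝ≥0∞)) (μ := P)
      ((measurable_of_countable _).comp hζ).aemeasurable
      ((measurable_of_countable _).comp hθ).aemeasurable
      (hind.comp (measurable_of_countable (fun n : ℕ => (n:ℝ≥0∞)))
        (measurable_of_countable (fun n : ℕ => (n:ℝ≥0∞))))
  rw [this, bern_lintegral ζ hζ h01ζ hdζ, bern_lintegral θ hθ h01θ hdθ]

lemma cross_term (V W : Ω → ℕ) (ζ θ : Ω → ℕ) {p q : ℝ} (i j : ℕ)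
    (hV : Measurable V) (hW : Measurable W) (hζ : Measurable ζ) (hθ : Measurable θ)
    (h01ζ : ∀ ω, ζ ω ≤ 1) (h01θ : ∀ ω, θ ω ≤ 1)
    (hdζ : P {ω | ζ ω = 1} = ENNReal.ofReal p) (hdθ : P {ω | θ ω = 1} = ENNReal.ofReal q)
    (hind2 : IndepFun (fun ω => (ζ ω, θ ω)) (fun ω => (V ω, W ω)) P)
    (hζθ : IndepFun ζ θ P) :
    ∫⁻ ω, (if i < V ω then (ζ ω : ℝ≥0∞) else 0) * (if j < W ω then (θ ω : ℝ≥0∞) else 0) ∂P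
      = ENNReal.ofReal p * ENNReal.ofReal q * P {ω | i < V ω ∧ j < W ω} := by
  have h : ∀ ω, (if i < V ω then (ζ ω : ℝ≥0∞) else 0) * (if j < W ω then (θ ω : ℝ≥0∞) else 0)
      = ((fun u : ℕ × ℕ => (u.1 : ℝ≥0∞) * (u.2 : ℝ≥0∞)) ∘ fun ω => (ζ ω, θ ω)) ω
        * ((fun u : ℕ × ℕ => if i < u.1 ∧ j < u.2 then (1:ℝ≥0∞) else 0)
            ∘ fun ω => (V ω, W ω)) ω := by
    intro ω
    by_cases hi : i < V ω <;> by_cases hj : j < W ω <;>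
      simp [hi, hj, mul_comm, mul_left_comm, mul_assoc]
  simp_rw [h]
  rw [lintegral_mul_eq_lintegral_mul_lintegral_of_indepFun''
      ((measurable_of_countable _).comp (hζ.prodMk hθ)).aemeasurable
      ((measurable_of_countable _).comp (hV.prodMk hW)).aemeasurable
      (hind2.comp (measurable_of_countable _) (measurable_of_countable _))]
  rw [show ∫⁻ ω, ((fun u : ℕ × ℕ => (u.1 : ℝ≥0∞) * (u.2 : ℝ≥0∞)) ∘ fun ω => (ζ ω, θ ω)) ω ∂P
      = ∫⁻ ω, (ζ ω : ℝ≥0∞) * (θ ω : ℝ≥0∞) ∂P from rfl,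
    pair_lintegral ζ θ hζ hθ h01ζ h01θ hdζ hdθ hζθ]
  congr 1
  have h2 : ∀ ω, ((fun u : ℕ × ℕ => if i < u.1 ∧ j < u.2 then (1:ℝ≥0∞) else 0)
      ∘ fun ω => (V ω, W ω)) ω
      = Set.indicator {ω | i < V ω ∧ j < W ω} (1 : Ω → ℝ≥0∞) ω := by
    intro ω; by_cases hc : i < V ω ∧ j < W ω <;> simp [Set.indicator, hc]
  simp_rw [h2]
  exact lintegral_indicator_one
    ((setm hV {n | i < n}).inter (setm hW {n | j < n}))

lemma thin_lintegral_mul (V W : Ω → ℕ) (ζ θ : ℕ → Ω → ℕ) {p q : ℝ}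
    (hV : Measurable V) (hW : Measurable W)
    (hζ : ∀ i, Measurable (ζ i)) (hθ : ∀ j, Measurable (θ j))
    (h01ζ : ∀ i ω, ζ i ω ≤ 1) (h01θ : ∀ j ω, θ j ω ≤ 1)
    (hdζ : ∀ i, P {ω | ζ i ω = 1} = ENNReal.ofReal p)
    (hdθ : ∀ j, P {ω | θ j ω = 1} = ENNReal.ofReal q)
    (hind2 : ∀ i j, IndepFun (fun ω => (ζ i ω, θ j ω)) (fun ω => (V ω, W ω)) P)
    (hζθ : ∀ i j, IndepFun (ζ i) (θ j) P) :
    ∫⁻ ω, (((∑ i ∈ Finset.range (V ω), ζ i ω) * (∑ j ∈ Finset.range (W ω), θ j ω) : ℕ) : ℝ≥0∞) ∂P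
      = ENNReal.ofReal p * ENNReal.ofReal q * ∫⁻ ω, ((V ω * W ω : ℕ) : ℝ≥0∞) ∂P := by
  have hpt2 : ∀ ω,
      (((∑ i ∈ Finset.range (V ω), ζ i ω) * (∑ j ∈ Finset.range (W ω), θ j ω) : ℕ) : ℝ≥0∞)
      = ∑' i : ℕ, ∑' j : ℕ,
          (if i < V ω then (ζ i ω : ℝ≥0∞) else 0) * (if j < W ω then (θ j ω : ℝ≥0∞) else 0) := by
    intro ω
    rw [Nat.cast_mul, hpt V ζ ω, hpt W θ ω, ← ENNReal.tsum_mul_right]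
    exact tsum_congr fun i => ENNReal.tsum_mul_left.symm
  simp_rw [hpt2]
  rw [lintegral_tsum fun i => Measurable.aemeasurable (by
    exact Measurable.ennreal_tsum fun j => (fmeas hV (hζ i) i).mul (fmeas hW (hθ j) j))]
  rw [tsum_congr fun i => lintegral_tsum fun j => Measurable.aemeasurable (by
    exact (fmeas hV (hζ i) i).mul (fmeas hW (hθ j) j))]
  rw [tsum_congr fun i => tsum_congr fun j =>
    cross_term V W (ζ i) (θ j) i j hV hW (hζ i) (hθ j) (h01ζ i) (h01θ j)
      (hdζ i) (hdθ j) (hind2 i j) (hζθ i j)]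
  rw [lintegral_nat_mul V W hV hW]
  simp_rw [ENNReal.tsum_mul_left]

lemma sq_term (W : Ω → ℕ) (ζ θ : Ω → ℕ) {p : ℝ} (i j : ℕ)
    (hW : Measurable W) (hζ : Measurable ζ) (hθ : Measurable θ)
    (h01ζ : ∀ ω, ζ ω ≤ 1) (h01θ : ∀ ω, θ ω ≤ 1)
    (hdζ : P {ω | ζ ω = 1} = ENNReal.ofReal p) (hdθ : P {ω | θ ω = 1} = ENNReal.ofReal p)
    (hind2 : IndepFun (fun ω => (ζ ω, θ ω)) W P)
    (hζθ : IndepFun ζ θ P) :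
    ∫⁻ ω, (if i < W ω then (ζ ω : ℝ≥0∞) else 0) * (if j < W ω then (θ ω : ℝ≥0∞) else 0) ∂P
      = ENNReal.ofReal p * ENNReal.ofReal p * P {ω | i < W ω ∧ j < W ω} := by
  have h : ∀ ω, (if i < W ω then (ζ ω : ℝ≥0∞) else 0) * (if j < W ω then (θ ω : ℝ≥0∞) else 0)
      = ((fun u : ℕ × ℕ => (u.1 : ℝ≥0∞) * (u.2 : ℝ≥0∞)) ∘ fun ω => (ζ ω, θ ω)) ω
        * ((fun m : ℕ => if i < m ∧ j < m then (1:ℝ≥0∞) else 0) ∘ W) ω := by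
    intro ω
    by_cases hi : i < W ω <;> by_cases hj : j < W ω <;>
      simp [hi, hj, mul_comm, mul_left_comm, mul_assoc]
  simp_rw [h]
  rw [lintegral_mul_eq_lintegral_mul_lintegral_of_indepFun''
      ((measurable_of_countable _).comp (hζ.prodMk hθ)).aemeasurable
      ((measurable_of_countable _).comp hW).aemeasurable
      (hind2.comp (measurable_of_countable _) (measurable_of_countable _))]
  rw [show ∫⁻ ω, ((fun u : ℕ × ℕ => (u.1 : ℝ≥0∞) * (u.2 : ℝ≥0∞)) ∘ fun ω => (ζ ω, θ ω)) ω ∂P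
      = ∫⁻ ω, (ζ ω : ℝ≥0∞) * (θ ω : ℝ≥0∞) ∂P from rfl,
    pair_lintegral ζ θ hζ hθ h01ζ h01θ hdζ hdθ hζθ]
  congr 1
  have h2 : ∀ ω, ((fun m : ℕ => if i < m ∧ j < m then (1:ℝ≥0∞) else 0) ∘ W) ω
      = Set.indicator {ω | i < W ω ∧ j < W ω} (1 : Ω → ℝ≥0∞) ω := by
    intro ω; by_cases hc : i < W ω ∧ j < W ω <;> simp [Set.indicator, hc]
  simp_rw [h2]
  exact lintegral_indicator_one
    ((setm hW {n | i < n}).inter (setm hW {n | j < n}))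

lemma thin_lintegral_sq (W : Ω → ℕ) (ζ : ℕ → Ω → ℕ) {p : ℝ} (hp : p ∈ Set.Ioc (0:ℝ) 1)
    (hW : Measurable W) (hζ : ∀ i, Measurable (ζ i))
    (h01 : ∀ i ω, ζ i ω ≤ 1) (hd : ∀ i, P {ω | ζ i ω = 1} = ENNReal.ofReal p)
    (hind : ∀ i, IndepFun (ζ i) W P)
    (hind2 : ∀ i j, i ≠ j → IndepFun (fun ω => (ζ i ω, ζ j ω)) W P)
    (hζind : ∀ i j, i ≠ j → IndepFun (ζ i) (ζ j) P) :
    ∫⁻ ω, (((∑ i ∈ Finset.range (W ω), ζ i ω) * (∑ i ∈ Finset.range (W ω), ζ i ω) : ℕ) : ℝ≥0∞) ∂P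
      = ENNReal.ofReal (p * p) * ∫⁻ ω, ((W ω * W ω : ℕ) : ℝ≥0∞) ∂P
        + ENNReal.ofReal (p * (1 - p)) * ∫⁻ ω, (W ω : ℝ≥0∞) ∂P := by
  have hpt2 : ∀ ω,
      (((∑ i ∈ Finset.range (W ω), ζ i ω) * (∑ i ∈ Finset.range (W ω), ζ i ω) : ℕ) : ℝ≥0∞)
      = ∑' i : ℕ, ∑' j : ℕ,
          (if i < W ω then (ζ i ω : ℝ≥0∞) else 0) * (if j < W ω then (ζ j ω : ℝ≥0∞) else 0) := by
    intro ω
    rw [Nat.cast_mul, hpt W ζ ω, ← ENNReal.tsum_mul_right]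
    exact tsum_congr fun i => ENNReal.tsum_mul_left.symm
  simp_rw [hpt2]
  rw [lintegral_tsum fun i => Measurable.aemeasurable (by
    exact Measurable.ennreal_tsum fun j => (fmeas hW (hζ i) i).mul (fmeas hW (hζ j) j))]
  rw [tsum_congr fun i => lintegral_tsum fun j => Measurable.aemeasurable (by
    exact (fmeas hW (hζ i) i).mul (fmeas hW (hζ j) j))]
  have hterm : ∀ i j : ℕ,
      ∫⁻ ω, (if i < W ω then (ζ i ω : ℝ≥0∞) else 0) * (if j < W ω then (ζ j ω : ℝ≥0∞) else 0) ∂P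
      = ENNReal.ofReal (p * p) * P {ω | i < W ω ∧ j < W ω}
        + (if i = j then ENNReal.ofReal (p * (1 - p)) * P {ω | i < W ω} else 0) := by
    intro i j
    by_cases hij : i = j
    · subst hij
      have hsq : ∀ ω, (if i < W ω then (ζ i ω : ℝ≥0∞) else 0)
            * (if i < W ω then (ζ i ω : ℝ≥0∞) else 0)
          = (if i < W ω then (ζ i ω : ℝ≥0∞) else 0) := by
        intro ω
        by_cases hc : i < W ω
        · rcases Nat.le_one_iff_eq_zero_or_eq_one.1 (h01 i ω) with h' | h' <;> simp [hc, h']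
        · simp [hc]
      simp_rw [hsq]
      rw [thin_term W (ζ i) i hW (hζ i) (h01 i) (hd i) (hind i)]
      simp only [if_true]
      have hset : {ω | i < W ω ∧ i < W ω} = {ω | i < W ω} := by ext ω; simp
      rw [hset, ← add_mul, ← ENNReal.ofReal_add (by nlinarith [hp.1, hp.2] : (0:ℝ) ≤ p * p)
          (by nlinarith [hp.1, hp.2] : (0:ℝ) ≤ p * (1 - p))]
      congr 1
      ring
    · rw [sq_term W (ζ i) (ζ j) i j hW (hζ i) (hζ j) (h01 i) (h01 j) (hd i) (hd j)
          (hind2 i j hij) (hζind i j hij), if_neg hij, add_zero, ← ENNReal.ofReal_mul hp.1.le]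
  rw [tsum_congr fun i => tsum_congr fun j => hterm i j]
  have hsplit : ∀ i : ℕ, ∑' j : ℕ, (ENNReal.ofReal (p * p) * P {ω | i < W ω ∧ j < W ω}
        + (if i = j then ENNReal.ofReal (p * (1 - p)) * P {ω | i < W ω} else 0))
      = ENNReal.ofReal (p * p) * ∑' j : ℕ, P {ω | i < W ω ∧ j < W ω}
        + ENNReal.ofReal (p * (1 - p)) * P {ω | i < W ω} := by
    intro i
    rw [ENNReal.tsum_add, ENNReal.tsum_mul_left]
    congr 1
    rw [tsum_eq_single i (fun j hj => if_neg fun h => hj h.symm), if_pos rfl]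
  rw [tsum_congr hsplit, ENNReal.tsum_add, ENNReal.tsum_mul_left, ENNReal.tsum_mul_left,
    ← lintegral_nat_mul W W hW hW, ← lintegral_nat W hW]

lemma nat_integral_eq (g : Ω → ℕ) (hg : Measurable g) :
    ∫ ω, (g ω : ℝ) ∂P = (∫⁻ ω, (g ω : ℝ≥0∞) ∂P).toReal := by
  rw [integral_eq_lintegral_of_nonneg_ae (ae_of_all _ fun ω => by positivity)
      (show AEStronglyMeasurable (fun ω => (g ω : ℝ)) P from
        ((measurable_of_countable _).comp hg).aestronglyMeasurable)]
  congr 1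
  exact lintegral_congr fun ω => ENNReal.ofReal_natCast _

lemma nat_lintegral_ne_top (g : Ω → ℕ) (hg : Integrable (fun ω => (g ω : ℝ)) P) :
    ∫⁻ ω, (g ω : ℝ≥0∞) ∂P ≠ ⊤ := by
  have h := hg.lintegral_lt_top
  rw [show ∫⁻ ω, ENNReal.ofReal ((g ω : ℝ)) ∂P = ∫⁻ ω, (g ω : ℝ≥0∞) ∂P from
    lintegral_congr fun ω => ENNReal.ofReal_natCast _] at h
  exact h.ne

lemma cov_eq (U V : Ω → ℝ) (hU : Integrable U P) (hV : Integrable V P)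
    (hUV : Integrable (fun ω => U ω * V ω) P) :
    cov P U V = ∫ ω, U ω * V ω ∂P - (∫ ω, U ω ∂P) * ∫ ω, V ω ∂P := by
  show (∫ ω, (U ω - ∫ ω', U ω' ∂P) * (V ω - ∫ ω', V ω' ∂P) ∂P) = _
  set a := ∫ ω', U ω' ∂P
  set b := ∫ ω', V ω' ∂P
  have h : ∀ ω, (U ω - a) * (V ω - b) = U ω * V ω - (a * V ω + b * U ω - a * b) := by
    intro ω; ring
  rw [show (fun ω => (U ω - a) * (V ω - b)) = fun ω => U ω * V ω - (a * V ω + b * U ω - a * b)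
    from funext h]
  have hi1 : Integrable (fun ω => a * V ω) P := hV.const_mul a
  have hi2 : Integrable (fun ω => b * U ω) P := hU.const_mul b
  have hi3 : Integrable (fun ω => a * V ω + b * U ω) P := hi1.add hi2
  have hi4 : Integrable (fun ω => a * V ω + b * U ω - a * b) P := hi3.sub (integrable_const _)
  rw [integral_sub hUV hi4, integral_sub hi3 (integrable_const _),
    integral_add hi1 hi2, integral_const_mul, integral_const_mul, integral_const]
  simp only [measure_univ, probReal_univ, ENNReal.toReal_one, smul_eq_mul, one_mul]
  ring

end
end ThinningHelpers

open ENNReal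
set_option maxHeartbeats 1000000

/-- let `Y, Z` be `ℕ`-valued random variables with finite second moments and
nonzero variances, and let `(ξ_i)` and `(η_j)` be i.i.d. Bernoulli(`r`) and Bernoulli(`s`)
sequences, everything jointly independent. For the componentwise thinnings
`Y_r = ∑_{i<Y} ξ_i` and `Z_s = ∑_{j<Z} η_j` one has `Cov(Y_r,Z_s) = r s Cov(Y,Z)`,
`Var(Y_r) = r² Var(Y) + r(1-r) E[Y]`, `Var(Z_s) = s² Var(Z) + s(1-s) E[Z]`, and if
`Var(Y_r) ≠ 0 ≠ Var(Z_s)` then `Corr(Y_r,Z_s)² ≤ Corr(Y,Z)²`, with equality when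
`r = s = 1`. -/
theorem thinning_diminishes_correlation {Ω : Type*} [MeasurableSpace Ω]
    (P : Measure Ω) [IsProbabilityMeasure P]
    (Y Z : Ω → ℕ) (ξ η : ℕ → Ω → ℕ) (r s : ℝ)
    (hr : r ∈ Set.Ioc (0 : ℝ) 1) (hs : s ∈ Set.Ioc (0 : ℝ) 1)
    (hYm : Measurable Y) (hZm : Measurable Z)
    (hξm : ∀ i, Measurable (ξ i)) (hηm : ∀ j, Measurable (η j))
    (hY2 : Integrable (fun ω => ((Y ω : ℝ)) ^ 2) P)
    (hZ2 : Integrable (fun ω => ((Z ω : ℝ)) ^ 2) P)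
    (hYvar : variance (fun ω => (Y ω : ℝ)) P ≠ 0)
    (hZvar : variance (fun ω => (Z ω : ℝ)) P ≠ 0)
    (hξ01 : ∀ i ω, ξ i ω ≤ 1) (hη01 : ∀ j ω, η j ω ≤ 1)
    (hξd : ∀ i, P {ω | ξ i ω = 1} = ENNReal.ofReal r)
    (hηd : ∀ j, P {ω | η j ω = 1} = ENNReal.ofReal s)
    (hindep : iIndepFun (m := JMS) (JFam Y Z ξ η) P) :
    cov P (fun ω => ((∑ i ∈ Finset.range (Y ω), ξ i ω : ℕ) : ℝ))
        (fun ω => ((∑ j ∈ Finset.range (Z ω), η j ω : ℕ) : ℝ))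
      = r * s * cov P (fun ω => (Y ω : ℝ)) (fun ω => (Z ω : ℝ)) ∧
    variance (fun ω => ((∑ i ∈ Finset.range (Y ω), ξ i ω : ℕ) : ℝ)) P
      = r ^ 2 * variance (fun ω => (Y ω : ℝ)) P
        + r * (1 - r) * ∫ ω, (Y ω : ℝ) ∂P ∧
    variance (fun ω => ((∑ j ∈ Finset.range (Z ω), η j ω : ℕ) : ℝ)) P
      = s ^ 2 * variance (fun ω => (Z ω : ℝ)) P
        + s * (1 - s) * ∫ ω, (Z ω : ℝ) ∂P ∧
    (variance (fun ω => ((∑ i ∈ Finset.range (Y ω), ξ i ω : ℕ) : ℝ)) P ≠ 0 →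
      variance (fun ω => ((∑ j ∈ Finset.range (Z ω), η j ω : ℕ) : ℝ)) P ≠ 0 →
      (corr P (fun ω => ((∑ i ∈ Finset.range (Y ω), ξ i ω : ℕ) : ℝ))
          (fun ω => ((∑ j ∈ Finset.range (Z ω), η j ω : ℕ) : ℝ))) ^ 2
        ≤ (corr P (fun ω => (Y ω : ℝ)) (fun ω => (Z ω : ℝ))) ^ 2) ∧
    (r = 1 → s = 1 →
      (corr P (fun ω => ((∑ i ∈ Finset.range (Y ω), ξ i ω : ℕ) : ℝ))
          (fun ω => ((∑ j ∈ Finset.range (Z ω), η j ω : ℕ) : ℝ))) ^ 2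
        = (corr P (fun ω => (Y ω : ℝ)) (fun ω => (Z ω : ℝ))) ^ 2) := by
  obtain ⟨hr0, hr1⟩ := hr
  obtain ⟨hs0, hs1⟩ := hs
  set cT : Ω → ℝ := fun ω => ((∑ i ∈ Finset.range (Y ω), ξ i ω : ℕ) : ℝ) with hcT
  set cS : Ω → ℝ := fun ω => ((∑ j ∈ Finset.range (Z ω), η j ω : ℕ) : ℝ) with hcS
  set cY : Ω → ℝ := fun ω => (Y ω : ℝ) with hcY
  set cZ : Ω → ℝ := fun ω => (Z ω : ℝ) with hcZ
  -- independence facts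
  have hJm : ∀ k, @Measurable Ω (JTy k) _ (JMS k) (JFam Y Z ξ η k) := by
    intro k
    match k with
    | .inl () => exact hYm.prodMk hZm
    | .inr (.inl i) => exact hξm i
    | .inr (.inr j) => exact hηm j
  have hIξYfst : ∀ i, IndepFun (ξ i) Y P := fun i =>
    (hindep.indepFun (show (Sum.inr (Sum.inl i) : JIdx) ≠ Sum.inl () by simp)).comp
      measurable_id measurable_fst
  have hIηZ : ∀ j, IndepFun (η j) Z P := fun j =>
    (hindep.indepFun (show (Sum.inr (Sum.inr j) : JIdx) ≠ Sum.inl () by simp)).comp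
      measurable_id measurable_snd
  have hIpairξY : ∀ i j, i ≠ j → IndepFun (fun ω => (ξ i ω, ξ j ω)) Y P := fun i j hij =>
    (hindep.indepFun_prodMk hJm (.inr (.inl i)) (.inr (.inl j)) (.inl ())
      (by simp) (by simp)).comp measurable_id measurable_fst
  have hIpairηZ : ∀ i j, i ≠ j → IndepFun (fun ω => (η i ω, η j ω)) Z P := fun i j hij =>
    (hindep.indepFun_prodMk hJm (.inr (.inr i)) (.inr (.inr j)) (.inl ())
      (by simp) (by simp)).comp measurable_id measurable_snd
  have hIξξ : ∀ i j, i ≠ j → IndepFun (ξ i) (ξ j) P := fun i j hij =>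
    hindep.indepFun (show (Sum.inr (Sum.inl i) : JIdx) ≠ Sum.inr (Sum.inl j) by simpa using hij)
  have hIηη : ∀ i j, i ≠ j → IndepFun (η i) (η j) P := fun i j hij =>
    hindep.indepFun (show (Sum.inr (Sum.inr i) : JIdx) ≠ Sum.inr (Sum.inr j) by simpa using hij)
  have hIξη : ∀ i j, IndepFun (ξ i) (η j) P := fun i j =>
    hindep.indepFun (show (Sum.inr (Sum.inl i) : JIdx) ≠ Sum.inr (Sum.inr j) by simp)
  have hIcross : ∀ i j, IndepFun (fun ω => (ξ i ω, η j ω)) (fun ω => (Y ω, Z ω)) P := fun i j =>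
    hindep.indepFun_prodMk hJm (.inr (.inl i)) (.inr (.inr j)) (.inl ()) (by simp) (by simp)
  -- measurability
  have hTm : Measurable fun ω => ∑ i ∈ Finset.range (Y ω), ξ i ω := thin_measurable Y ξ hYm hξm
  have hSm : Measurable fun ω => ∑ j ∈ Finset.range (Z ω), η j ω := thin_measurable Z η hZm hηm
  have hTle : ∀ ω, (∑ i ∈ Finset.range (Y ω), ξ i ω) ≤ Y ω := fun ω =>
    (Finset.sum_le_sum fun i _ => hξ01 i ω).trans (by simp)
  have hSle : ∀ ω, (∑ j ∈ Finset.range (Z ω), η j ω) ≤ Z ω := fun ω =>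
    (Finset.sum_le_sum fun j _ => hη01 j ω).trans (by simp)
  -- integrability
  have hYint : Integrable cY P := by
    refine (hY2.add (integrable_const 1)).mono'
      (((measurable_of_countable _).comp hYm).aestronglyMeasurable)
      (ae_of_all _ fun ω => ?_)
    show ‖(Y ω : ℝ)‖ ≤ (Y ω : ℝ) ^ 2 + 1
    rw [Real.norm_eq_abs, abs_of_nonneg (Nat.cast_nonneg _)]
    nlinarith [sq_nonneg ((Y ω : ℝ) - 1), Nat.cast_nonneg (α := ℝ) (Y ω)]
  have hZint : Integrable cZ P := by
    refine (hZ2.add (integrable_const 1)).mono'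
      (((measurable_of_countable _).comp hZm).aestronglyMeasurable)
      (ae_of_all _ fun ω => ?_)
    show ‖(Z ω : ℝ)‖ ≤ (Z ω : ℝ) ^ 2 + 1
    rw [Real.norm_eq_abs, abs_of_nonneg (Nat.cast_nonneg _)]
    nlinarith [sq_nonneg ((Z ω : ℝ) - 1), Nat.cast_nonneg (α := ℝ) (Z ω)]
  have hTint : Integrable cT P := by
    refine hYint.mono' (((measurable_of_countable _).comp hTm).aestronglyMeasurable)
      (ae_of_all _ fun ω => ?_)
    show ‖((∑ i ∈ Finset.range (Y ω), ξ i ω : ℕ) : ℝ)‖ ≤ (Y ω : ℝ)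
    rw [Real.norm_eq_abs, abs_of_nonneg (Nat.cast_nonneg _)]
    exact_mod_cast hTle ω
  have hSint : Integrable cS P := by
    refine hZint.mono' (((measurable_of_countable _).comp hSm).aestronglyMeasurable)
      (ae_of_all _ fun ω => ?_)
    show ‖((∑ j ∈ Finset.range (Z ω), η j ω : ℕ) : ℝ)‖ ≤ (Z ω : ℝ)
    rw [Real.norm_eq_abs, abs_of_nonneg (Nat.cast_nonneg _)]
    exact_mod_cast hSle ω
  have hYYint : Integrable (fun ω => ((Y ω * Y ω : ℕ) : ℝ)) P :=
    hY2.congr (ae_of_all _ fun ω => by push_cast; ring)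
  have hZZint : Integrable (fun ω => ((Z ω * Z ω : ℕ) : ℝ)) P :=
    hZ2.congr (ae_of_all _ fun ω => by push_cast; ring)
  have hYZint : Integrable (fun ω => ((Y ω * Z ω : ℕ) : ℝ)) P := by
    refine (hY2.add hZ2).mono'
      (((measurable_of_countable _).comp (hYm.mul hZm)).aestronglyMeasurable)
      (ae_of_all _ fun ω => ?_)
    show ‖((Y ω * Z ω : ℕ) : ℝ)‖ ≤ (Y ω : ℝ) ^ 2 + (Z ω : ℝ) ^ 2
    rw [Real.norm_eq_abs, abs_of_nonneg (Nat.cast_nonneg _)]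
    push_cast
    nlinarith [sq_nonneg ((Y ω : ℝ) - (Z ω : ℝ))]
  have hTTint : Integrable (fun ω =>
      (((∑ i ∈ Finset.range (Y ω), ξ i ω) * (∑ i ∈ Finset.range (Y ω), ξ i ω) : ℕ) : ℝ)) P := by
    refine hYYint.mono'
      (((measurable_of_countable _).comp (hTm.mul hTm)).aestronglyMeasurable)
      (ae_of_all _ fun ω => ?_)
    rw [Real.norm_eq_abs, abs_of_nonneg (Nat.cast_nonneg _)]
    exact_mod_cast Nat.mul_le_mul (hTle ω) (hTle ω)
  have hSSint : Integrable (fun ω =>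
      (((∑ j ∈ Finset.range (Z ω), η j ω) * (∑ j ∈ Finset.range (Z ω), η j ω) : ℕ) : ℝ)) P := by
    refine hZZint.mono'
      (((measurable_of_countable _).comp (hSm.mul hSm)).aestronglyMeasurable)
      (ae_of_all _ fun ω => ?_)
    rw [Real.norm_eq_abs, abs_of_nonneg (Nat.cast_nonneg _)]
    exact_mod_cast Nat.mul_le_mul (hSle ω) (hSle ω)
  have hTSintNat : Integrable (fun ω =>
      (((∑ i ∈ Finset.range (Y ω), ξ i ω) * (∑ j ∈ Finset.range (Z ω), η j ω) : ℕ) : ℝ)) P := by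
    refine hYZint.mono'
      (((measurable_of_countable _).comp (hTm.mul hSm)).aestronglyMeasurable)
      (ae_of_all _ fun ω => ?_)
    rw [Real.norm_eq_abs, abs_of_nonneg (Nat.cast_nonneg _)]
    exact_mod_cast Nat.mul_le_mul (hTle ω) (hSle ω)
  have hTSint : Integrable (fun ω => cT ω * cS ω) P :=
    hTSintNat.congr (ae_of_all _ fun ω => by simp only [hcT, hcS]; push_cast; ring)
  have hYZint' : Integrable (fun ω => cY ω * cZ ω) P :=
    hYZint.congr (ae_of_all _ fun ω => by simp only [hcY, hcZ]; push_cast; ring)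
  -- real moments
  have eT : ∫ ω, cT ω ∂P
      = (∫⁻ ω, ((∑ i ∈ Finset.range (Y ω), ξ i ω : ℕ) : ℝ≥0∞) ∂P).toReal :=
    nat_integral_eq _ hTm
  have eS : ∫ ω, cS ω ∂P
      = (∫⁻ ω, ((∑ j ∈ Finset.range (Z ω), η j ω : ℕ) : ℝ≥0∞) ∂P).toReal :=
    nat_integral_eq _ hSm
  have eY : ∫ ω, cY ω ∂P = (∫⁻ ω, (Y ω : ℝ≥0∞) ∂P).toReal := nat_integral_eq _ hYm
  have eZ : ∫ ω, cZ ω ∂P = (∫⁻ ω, (Z ω : ℝ≥0∞) ∂P).toReal := nat_integral_eq _ hZm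
  have eYY : ∫ ω, cY ω ^ 2 ∂P = (∫⁻ ω, ((Y ω * Y ω : ℕ) : ℝ≥0∞) ∂P).toReal := by
    rw [show (fun ω => cY ω ^ 2) = fun ω => ((Y ω * Y ω : ℕ) : ℝ) from
      funext fun ω => by simp only [hcT, hcS, hcY, hcZ]; push_cast; ring]
    exact nat_integral_eq _ (hYm.mul hYm)
  have eZZ : ∫ ω, cZ ω ^ 2 ∂P = (∫⁻ ω, ((Z ω * Z ω : ℕ) : ℝ≥0∞) ∂P).toReal := by
    rw [show (fun ω => cZ ω ^ 2) = fun ω => ((Z ω * Z ω : ℕ) : ℝ) from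
      funext fun ω => by simp only [hcT, hcS, hcY, hcZ]; push_cast; ring]
    exact nat_integral_eq _ (hZm.mul hZm)
  have mT1 : ∫ ω, cT ω ∂P = r * ∫ ω, cY ω ∂P := by
    rw [eT, thin_lintegral Y ξ hYm hξm hξ01 hξd hIξYfst, ENNReal.toReal_mul,
      ENNReal.toReal_ofReal hr0.le, eY]
  have mS1 : ∫ ω, cS ω ∂P = s * ∫ ω, cZ ω ∂P := by
    rw [eS, thin_lintegral Z η hZm hηm hη01 hηd hIηZ, ENNReal.toReal_mul,
      ENNReal.toReal_ofReal hs0.le, eZ]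
  have mT2 : ∫ ω, cT ω ^ 2 ∂P = (r * r) * ∫ ω, cY ω ^ 2 ∂P + (r * (1 - r)) * ∫ ω, cY ω ∂P := by
    rw [show (fun ω => cT ω ^ 2) = fun ω =>
        (((∑ i ∈ Finset.range (Y ω), ξ i ω) * (∑ i ∈ Finset.range (Y ω), ξ i ω) : ℕ) : ℝ) from
      funext fun ω => by simp only [hcT, hcS, hcY, hcZ]; push_cast; ring]
    rw [nat_integral_eq (fun ω => (∑ i ∈ Finset.range (Y ω), ξ i ω) * (∑ i ∈ Finset.range (Y ω), ξ i ω)) (hTm.mul hTm),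
      thin_lintegral_sq Y ξ ⟨hr0, hr1⟩ hYm hξm hξ01 hξd hIξYfst hIpairξY hIξξ,
      ENNReal.toReal_add
        (ENNReal.mul_ne_top ENNReal.ofReal_ne_top (nat_lintegral_ne_top _ hYYint))
        (ENNReal.mul_ne_top ENNReal.ofReal_ne_top (nat_lintegral_ne_top _ hYint)),
      ENNReal.toReal_mul, ENNReal.toReal_mul,
      ENNReal.toReal_ofReal (by nlinarith : (0:ℝ) ≤ r * r),
      ENNReal.toReal_ofReal (by nlinarith : (0:ℝ) ≤ r * (1 - r)), eYY, eY]
  have mS2 : ∫ ω, cS ω ^ 2 ∂P = (s * s) * ∫ ω, cZ ω ^ 2 ∂P + (s * (1 - s)) * ∫ ω, cZ ω ∂P := by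
    rw [show (fun ω => cS ω ^ 2) = fun ω =>
        (((∑ j ∈ Finset.range (Z ω), η j ω) * (∑ j ∈ Finset.range (Z ω), η j ω) : ℕ) : ℝ) from
      funext fun ω => by simp only [hcT, hcS, hcY, hcZ]; push_cast; ring]
    rw [nat_integral_eq (fun ω => (∑ j ∈ Finset.range (Z ω), η j ω) * (∑ j ∈ Finset.range (Z ω), η j ω)) (hSm.mul hSm),
      thin_lintegral_sq Z η ⟨hs0, hs1⟩ hZm hηm hη01 hηd hIηZ hIpairηZ hIηη,
      ENNReal.toReal_add
        (ENNReal.mul_ne_top ENNReal.ofReal_ne_top (nat_lintegral_ne_top _ hZZint))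
        (ENNReal.mul_ne_top ENNReal.ofReal_ne_top (nat_lintegral_ne_top _ hZint)),
      ENNReal.toReal_mul, ENNReal.toReal_mul,
      ENNReal.toReal_ofReal (by nlinarith : (0:ℝ) ≤ s * s),
      ENNReal.toReal_ofReal (by nlinarith : (0:ℝ) ≤ s * (1 - s)), eZZ, eZ]
  have mTS : ∫ ω, cT ω * cS ω ∂P = (r * s) * ∫ ω, cY ω * cZ ω ∂P := by
    rw [show (fun ω => cT ω * cS ω) = fun ω =>
        (((∑ i ∈ Finset.range (Y ω), ξ i ω) * (∑ j ∈ Finset.range (Z ω), η j ω) : ℕ) : ℝ) from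
      funext fun ω => by simp only [hcT, hcS, hcY, hcZ]; push_cast; ring]
    rw [show (fun ω => cY ω * cZ ω) = fun ω => ((Y ω * Z ω : ℕ) : ℝ) from
      funext fun ω => by simp only [hcT, hcS, hcY, hcZ]; push_cast; ring]
    rw [nat_integral_eq (fun ω => (∑ i ∈ Finset.range (Y ω), ξ i ω) * (∑ j ∈ Finset.range (Z ω), η j ω)) (hTm.mul hSm),
      thin_lintegral_mul Y Z ξ η hYm hZm hξm hηm hξ01 hη01 hξd hηd hIcross hIξη,
      nat_integral_eq (fun ω => Y ω * Z ω) (hYm.mul hZm), ENNReal.toReal_mul, ENNReal.toReal_mul,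
      ENNReal.toReal_ofReal hr0.le, ENNReal.toReal_ofReal hs0.le, mul_assoc]
  -- covariance
  have covTS : cov P cT cS = ∫ ω, cT ω * cS ω ∂P - (∫ ω, cT ω ∂P) * ∫ ω, cS ω ∂P :=
    cov_eq cT cS hTint hSint hTSint
  have covYZ : cov P cY cZ = ∫ ω, cY ω * cZ ω ∂P - (∫ ω, cY ω ∂P) * ∫ ω, cZ ω ∂P :=
    cov_eq cY cZ hYint hZint hYZint'
  have goal1 : cov P cT cS = r * s * cov P cY cZ := by
    rw [covTS, covYZ, mTS, mT1, mS1]; ring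
  -- variances
  have hmemY : MemLp cY 2 P :=
    (memLp_two_iff_integrable_sq
      (((measurable_of_countable _).comp hYm).aestronglyMeasurable)).mpr
      (hY2.congr (ae_of_all _ fun ω => rfl))
  have hmemZ : MemLp cZ 2 P :=
    (memLp_two_iff_integrable_sq
      (((measurable_of_countable _).comp hZm).aestronglyMeasurable)).mpr
      (hZ2.congr (ae_of_all _ fun ω => rfl))
  have hmemT : MemLp cT 2 P :=
    (memLp_two_iff_integrable_sq
      (((measurable_of_countable _).comp hTm).aestronglyMeasurable)).mpr
      (hTTint.congr (ae_of_all _ fun ω => by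
        simp only [hcT, Pi.pow_apply]; rw [pow_two, Nat.cast_mul]; rfl))
  have hmemS : MemLp cS 2 P :=
    (memLp_two_iff_integrable_sq
      (((measurable_of_countable _).comp hSm).aestronglyMeasurable)).mpr
      (hSSint.congr (ae_of_all _ fun ω => by
        simp only [hcS, Pi.pow_apply]; rw [pow_two, Nat.cast_mul]; rfl))
  have varT : variance cT P = ∫ ω, cT ω ^ 2 ∂P - (∫ ω, cT ω ∂P) ^ 2 := variance_eq_sub hmemT
  have varS : variance cS P = ∫ ω, cS ω ^ 2 ∂P - (∫ ω, cS ω ∂P) ^ 2 := variance_eq_sub hmemS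
  have varY : variance cY P = ∫ ω, cY ω ^ 2 ∂P - (∫ ω, cY ω ∂P) ^ 2 := variance_eq_sub hmemY
  have varZ : variance cZ P = ∫ ω, cZ ω ^ 2 ∂P - (∫ ω, cZ ω ∂P) ^ 2 := variance_eq_sub hmemZ
  have goal2 : variance cT P = r ^ 2 * variance cY P + r * (1 - r) * ∫ ω, cY ω ∂P := by
    rw [varT, varY, mT2, mT1]; ring
  have goal3 : variance cS P = s ^ 2 * variance cZ P + s * (1 - s) * ∫ ω, cZ ω ∂P := by
    rw [varS, varZ, mS2, mS1]; ring
  -- the inequality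
  have hvY : 0 < variance cY P := (variance_nonneg cY P).lt_of_ne (Ne.symm hYvar)
  have hvZ : 0 < variance cZ P := (variance_nonneg cZ P).lt_of_ne (Ne.symm hZvar)
  have hEY : 0 ≤ ∫ ω, cY ω ∂P := integral_nonneg fun ω => Nat.cast_nonneg _
  have hEZ : 0 ≤ ∫ ω, cZ ω ∂P := integral_nonneg fun ω => Nat.cast_nonneg _
  have hgeT : r ^ 2 * variance cY P ≤ variance cT P := by
    rw [goal2]
    have h0 : 0 ≤ r * (1 - r) * ∫ ω, cY ω ∂P :=
      mul_nonneg (mul_nonneg hr0.le (by linarith)) hEY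
    linarith
  have hgeS : s ^ 2 * variance cZ P ≤ variance cS P := by
    rw [goal3]
    have h0 : 0 ≤ s * (1 - s) * ∫ ω, cZ ω ∂P :=
      mul_nonneg (mul_nonneg hs0.le (by linarith)) hEZ
    linarith
  have hvT : 0 < variance cT P := lt_of_lt_of_le (by positivity) hgeT
  have hvS : 0 < variance cS P := lt_of_lt_of_le (by positivity) hgeS
  have hprodT : 0 < variance cT P * variance cS P := mul_pos hvT hvS
  have hprodY : 0 < variance cY P * variance cZ P := mul_pos hvY hvZ
  have goal4 : (corr P cT cS) ^ 2 ≤ (corr P cY cZ) ^ 2 := by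
    rw [show corr P cT cS = cov P cT cS / Real.sqrt (variance cT P * variance cS P) from rfl,
      show corr P cY cZ = cov P cY cZ / Real.sqrt (variance cY P * variance cZ P) from rfl,
      div_pow, div_pow, Real.sq_sqrt hprodT.le, Real.sq_sqrt hprodY.le, goal1]
    rw [div_le_div_iff₀ hprodT hprodY]
    have h3 : (r ^ 2 * variance cY P) * (s ^ 2 * variance cZ P)
        ≤ variance cT P * variance cS P :=
      mul_le_mul hgeT hgeS (by positivity) hvT.le
    calc (r * s * cov P cY cZ) ^ 2 * (variance cY P * variance cZ P)
        = (cov P cY cZ) ^ 2 * ((r ^ 2 * variance cY P) * (s ^ 2 * variance cZ P)) := by ring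
      _ ≤ (cov P cY cZ) ^ 2 * (variance cT P * variance cS P) :=
          mul_le_mul_of_nonneg_left h3 (sq_nonneg _)
  have goal5 : r = 1 → s = 1 → (corr P cT cS) ^ 2 = (corr P cY cZ) ^ 2 := by
    intro hre hse
    have e1 : cov P cT cS = cov P cY cZ := by rw [goal1, hre, hse]; ring
    have e2 : variance cT P = variance cY P := by rw [goal2, hre]; ring
    have e3 : variance cS P = variance cZ P := by rw [goal3, hse]; ring
    rw [show corr P cT cS = cov P cT cS / Real.sqrt (variance cT P * variance cS P) from rfl,
      show corr P cY cZ = cov P cY cZ / Real.sqrt (variance cY P * variance cZ P) from rfl,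
      e1, e2, e3]
  exact ⟨goal1, goal2, goal3, fun _ _ => goal4, goal5⟩
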